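/- Let R be a subring of a division ring D and let 0 → M1 → M2 → M3 → 0 be a short exact sequence of left R-modules. Assume that (1) M1 and M3 are D-torsion-free, (2) dim_D M1 and dim_D M3 are finite, and (3) dim_D M1 + dim_D M3 = dim_D M2. Then M2 is also D-torsion-free. -/

import Mathlib

open scoped TensorProduct

universe u

/-- The balancing relations defining the tensor product `D ⊗_R M` over the (possibly
noncommutative) ring `R` as a quotient of `D ⊗_ℤ M`. -/
def tensorRel (D : Type u) [DivisionRing D] (R : Subring D)
    (M : Type u) [AddCommGroup M] [Module R M] : Submodule ℤ (D ⊗[ℤ] M) :=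
  Submodule.span ℤ
    {x | ∃ (d : D) (r : R) (m : M), x = (d * (r : D)) ⊗ₜ[ℤ] m - d ⊗ₜ[ℤ] (r • m)}

/-- The tensor product `D ⊗_R M` of the right `R`-module `D` and the left `R`-module `M`,
realized as the quotient of `D ⊗_ℤ M` by the balancing relations. -/
abbrev NCTensor (D : Type u) [DivisionRing D] (R : Subring D)
    (M : Type u) [AddCommGroup M] [Module R M] :=
  (D ⊗[ℤ] M) ⧸ tensorRel D R M

section

variable (D : Type u) [DivisionRing D] (R : Subring D)
variable (M : Type u) [AddCommGroup M] [Module R M]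

/-- Left multiplication by `d : D` on `D ⊗_ℤ M`. -/
noncomputable def lmulAux (d : D) : (D ⊗[ℤ] M) →ₗ[ℤ] (D ⊗[ℤ] M) :=
  TensorProduct.map ((AddMonoidHom.mulLeft d).toIntLinearMap) LinearMap.id

lemma lmulAux_rel (d : D) :
    tensorRel D R M ≤ (tensorRel D R M).comap (lmulAux D M d) := by
  rw [tensorRel, Submodule.span_le]
  rintro x ⟨a, r, m, rfl⟩
  have h : (d * (a * (r : D))) ⊗ₜ[ℤ] m - (d * a) ⊗ₜ[ℤ] (r • m) ∈ tensorRel D R M := by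
    rw [← mul_assoc]
    exact Submodule.subset_span ⟨d * a, r, m, rfl⟩
  rw [SetLike.mem_coe, Submodule.mem_comap]
  have e : lmulAux D M d ((a * (r : D)) ⊗ₜ[ℤ] m - a ⊗ₜ[ℤ] (r • m)) =
      (d * (a * (r : D))) ⊗ₜ[ℤ] m - (d * a) ⊗ₜ[ℤ] (r • m) := by
    rw [map_sub]
    rfl
  rw [e]
  exact h

/-- Left multiplication by `d : D` on `D ⊗_R M`. -/
noncomputable def lmulQ (d : D) : NCTensor D R M →ₗ[ℤ] NCTensor D R M :=
  Submodule.mapQ _ _ (lmulAux D M d) (lmulAux_rel D R M d)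

lemma lmulQ_mk_tmul (d a : D) (m : M) :
    lmulQ D R M d (Submodule.Quotient.mk (a ⊗ₜ[ℤ] m)) =
      Submodule.Quotient.mk ((d * a) ⊗ₜ[ℤ] m) := by
  rw [lmulQ, Submodule.mapQ_apply]
  rfl

lemma NCTensor.inductionOn {P : NCTensor D R M → Prop} (x : NCTensor D R M)
    (zero : P 0)
    (tmul : ∀ (a : D) (m : M), P (Submodule.Quotient.mk (a ⊗ₜ[ℤ] m)))
    (add : ∀ x y, P x → P y → P (x + y)) : P x := by
  obtain ⟨y, rfl⟩ := Submodule.Quotient.mk_surjective _ x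
  induction y using TensorProduct.induction_on with
  | zero => simpa using zero
  | tmul a m => exact tmul a m
  | add y z hy hz =>
      rw [Submodule.Quotient.mk_add]
      exact add _ _ hy hz

noncomputable instance : SMul D (NCTensor D R M) :=
  ⟨fun d x => lmulQ D R M d x⟩

lemma nct_smul_def (d : D) (x : NCTensor D R M) : d • x = lmulQ D R M d x := rfl

/-- The left `D`-module structure on `D ⊗_R M`. -/
noncomputable instance : Module D (NCTensor D R M) where
  one_smul x := by
    refine NCTensor.inductionOn D R M (P := fun z => (1 : D) • z = z) x ?_ ?_ ?_
    · simp only [nct_smul_def, map_zero]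
    · intro a m
      rw [nct_smul_def, lmulQ_mk_tmul, one_mul]
    · intro x y hx hy
      rw [nct_smul_def, map_add, ← nct_smul_def, ← nct_smul_def, hx, hy]
  mul_smul d e x := by
    refine NCTensor.inductionOn D R M (P := fun z => (d * e) • z = d • e • z) x ?_ ?_ ?_
    · simp only [nct_smul_def, map_zero]
    · intro a m
      simp only [nct_smul_def, lmulQ_mk_tmul, mul_assoc]
    · intro x y hx hy
      simp only [nct_smul_def, map_add] at hx hy ⊢
      rw [hx, hy]
  smul_zero d := map_zero (lmulQ D R M d)
  smul_add d x y := map_add (lmulQ D R M d) x y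
  add_smul d e x := by
    refine NCTensor.inductionOn D R M (P := fun z => (d + e) • z = d • z + e • z) x ?_ ?_ ?_
    · simp only [nct_smul_def, map_zero, add_zero]
    · intro a m
      simp only [nct_smul_def, lmulQ_mk_tmul, add_mul]
      rw [TensorProduct.add_tmul, Submodule.Quotient.mk_add]
    · intro x y hx hy
      simp only [nct_smul_def, map_add] at hx hy ⊢
      rw [hx, hy]
      abel
  zero_smul x := by
    refine NCTensor.inductionOn D R M (P := fun z => (0 : D) • z = 0) x ?_ ?_ ?_
    · simp only [nct_smul_def, map_zero]
    · intro a m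
      rw [nct_smul_def, lmulQ_mk_tmul, zero_mul, TensorProduct.zero_tmul,
        Submodule.Quotient.mk_zero]
    · intro x y hx hy
      rw [nct_smul_def, map_add, ← nct_smul_def, ← nct_smul_def, hx, hy, add_zero]

/-- The canonical map `M → D ⊗_R M`, `m ↦ 1 ⊗ m`. -/
noncomputable def toNCTensor : M → NCTensor D R M :=
  fun m => Submodule.Quotient.mk ((1 : D) ⊗ₜ[ℤ] m)

/-- A left `R`-module `M` is *`D`-torsion-free* if the canonical map `M → D ⊗_R M`,
`m ↦ 1 ⊗ m`, is injective. -/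
def IsDTorsionFree : Prop := Function.Injective (toNCTensor D R M)

end


section Functorial

variable (D : Type u) [DivisionRing D] (R : Subring D)
variable {M N : Type u} [AddCommGroup M] [Module R M] [AddCommGroup N] [Module R N]

/-- The map `D ⊗_ℤ M → D ⊗_ℤ N` induced by an `R`-linear map `φ : M → N`. -/
noncomputable def ncMapAux (φ : M →ₗ[R] N) : (D ⊗[ℤ] M) →ₗ[ℤ] (D ⊗[ℤ] N) :=
  LinearMap.lTensor D φ.toAddMonoidHom.toIntLinearMap

lemma ncMapAux_rel (φ : M →ₗ[R] N) :
    tensorRel D R M ≤ (tensorRel D R N).comap (ncMapAux D R φ) := by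
  rw [tensorRel, Submodule.span_le]
  rintro x ⟨d, r, m, rfl⟩
  rw [SetLike.mem_coe, Submodule.mem_comap]
  have e : ncMapAux D R φ ((d * (r : D)) ⊗ₜ[ℤ] m - d ⊗ₜ[ℤ] (r • m)) =
      (d * (r : D)) ⊗ₜ[ℤ] φ m - d ⊗ₜ[ℤ] (r • φ m) := by
    rw [map_sub, ← map_smul φ r m]
    rfl
  rw [e]
  exact Submodule.subset_span ⟨d, r, φ m, rfl⟩

/-- The induced map `D ⊗_R M → D ⊗_R N`, as a `ℤ`-linear map. -/
noncomputable def ncMapZ (φ : M →ₗ[R] N) : NCTensor D R M →ₗ[ℤ] NCTensor D R N :=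
  Submodule.mapQ _ _ (ncMapAux D R φ) (ncMapAux_rel D R φ)

lemma ncMapZ_mk (φ : M →ₗ[R] N) (x : D ⊗[ℤ] M) :
    ncMapZ D R φ (Submodule.Quotient.mk x) = Submodule.Quotient.mk (ncMapAux D R φ x) :=
  rfl

lemma ncMapZ_mk_tmul (φ : M →ₗ[R] N) (d : D) (m : M) :
    ncMapZ D R φ (Submodule.Quotient.mk (d ⊗ₜ[ℤ] m)) =
      Submodule.Quotient.mk (d ⊗ₜ[ℤ] φ m) := by
  rw [ncMapZ_mk]; rfl

/-- The induced map `D ⊗_R M → D ⊗_R N`, as a `D`-linear map. -/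
noncomputable def ncMap (φ : M →ₗ[R] N) : NCTensor D R M →ₗ[D] NCTensor D R N where
  toFun := ncMapZ D R φ
  map_add' := map_add _
  map_smul' d x := by
    simp only [RingHom.id_apply]
    refine NCTensor.inductionOn D R M
      (P := fun z => ncMapZ D R φ (d • z) = d • ncMapZ D R φ z) x ?_ ?_ ?_
    · show ncMapZ D R φ (d • (0 : NCTensor D R M)) = d • ncMapZ D R φ 0
      rw [smul_zero, map_zero, smul_zero]
    · intro a m
      show ncMapZ D R φ (d • (Submodule.Quotient.mk (a ⊗ₜ[ℤ] m) : NCTensor D R M)) =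
        d • ncMapZ D R φ (Submodule.Quotient.mk (a ⊗ₜ[ℤ] m))
      rw [nct_smul_def, lmulQ_mk_tmul, ncMapZ_mk_tmul, ncMapZ_mk_tmul, nct_smul_def,
        lmulQ_mk_tmul]
    · intro x y hx hy
      show ncMapZ D R φ (d • (x + y)) = d • ncMapZ D R φ (x + y)
      rw [smul_add, map_add, map_add, smul_add, hx, hy]

lemma ncMap_mk (φ : M →ₗ[R] N) (x : D ⊗[ℤ] M) :
    ncMap D R φ (Submodule.Quotient.mk x) = Submodule.Quotient.mk (ncMapAux D R φ x) :=
  ncMapZ_mk D R φ x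

lemma ncMap_toNCTensor (φ : M →ₗ[R] N) (m : M) :
    ncMap D R φ (toNCTensor D R M m) = toNCTensor D R N (φ m) :=
  ncMapZ_mk_tmul D R φ 1 m

lemma toNCTensor_zero : toNCTensor D R M 0 = 0 := by
  simp [toNCTensor]

lemma toNCTensor_sub (m m' : M) :
    toNCTensor D R M (m - m') = toNCTensor D R M m - toNCTensor D R M m' := by
  simp [toNCTensor, TensorProduct.tmul_sub]

end Functorial

section SES

variable (D : Type u) [DivisionRing D] (R : Subring D)
variable {M1 M2 M3 : Type u} [AddCommGroup M1] [Module R M1] [AddCommGroup M2] [Module R M2]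
  [AddCommGroup M3] [Module R M3]
variable (f : M1 →ₗ[R] M2) (g : M2 →ₗ[R] M3)

lemma rank_quot_range_ncMap_le (hg : Function.Surjective g) (hfg : Function.Exact f g) :
    Module.rank D (NCTensor D R M2 ⧸ LinearMap.range (ncMap D R f)) ≤
      Module.rank D (NCTensor D R M3) := by
  classical
  set fZ := f.toAddMonoidHom.toIntLinearMap with hfZ
  set gZ := g.toAddMonoidHom.toIntLinearMap with hgZdef
  have hgZs : Function.Surjective gZ := hg
  have hfgZ : Function.Exact fZ gZ := hfg
  set P : Submodule D (NCTensor D R M2) := LinearMap.range (ncMap D R f) with hP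
  set σ : @LinearMap ℤ ℤ _ _ (RingHom.id ℤ) (D ⊗[ℤ] M2) (NCTensor D R M2 ⧸ P) _ _
      TensorProduct.instModule _ :=
    ((Submodule.mkQ P).toAddMonoidHom.toIntLinearMap).comp
      (Submodule.mkQ (tensorRel D R M2)) with hσ
  have hσmk : ∀ x : D ⊗[ℤ] M2,
      σ x = Submodule.mkQ P (Submodule.Quotient.mk x) := fun x => rfl
  have hrange : LinearMap.range (LinearMap.lTensor D fZ) ≤ LinearMap.ker σ := by
    rintro _ ⟨x, rfl⟩
    have e : σ (LinearMap.lTensor D fZ x) =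
        Submodule.mkQ P (ncMap D R f (Submodule.Quotient.mk x)) := by
      rw [ncMap_mk]; rfl
    show σ (LinearMap.lTensor D fZ x) = 0
    rw [e, Submodule.mkQ_apply, Submodule.Quotient.mk_eq_zero]
    exact ⟨Submodule.Quotient.mk x, rfl⟩
  set ψ : (D ⊗[ℤ] M3) →ₗ[ℤ] (NCTensor D R M2 ⧸ P) :=
    (Submodule.liftQ _ σ hrange).comp (lTensor.inverse D hfgZ hgZs) with hψ
  have hψg : ∀ x : D ⊗[ℤ] M2, ψ (LinearMap.lTensor D gZ x) = σ x := by
    intro x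
    show Submodule.liftQ _ σ hrange (lTensor.inverse D hfgZ hgZs (LinearMap.lTensor D gZ x)) = σ x
    rw [lTensor.inverse_apply, Submodule.liftQ_apply]
  have hψrel : tensorRel D R M3 ≤ LinearMap.ker ψ := by
    rw [tensorRel, Submodule.span_le]
    rintro _ ⟨d, r, m3, rfl⟩
    obtain ⟨m2, rfl⟩ := hg m3
    have e : (d * (r : D)) ⊗ₜ[ℤ] (g m2) - d ⊗ₜ[ℤ] (r • (g m2))
        = LinearMap.lTensor D gZ ((d * (r : D)) ⊗ₜ[ℤ] m2 - d ⊗ₜ[ℤ] (r • m2)) := by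
      simp only [map_sub, LinearMap.lTensor_tmul, AddMonoidHom.coe_toIntLinearMap,
        LinearMap.toAddMonoidHom_coe, hgZdef, map_smul]
    rw [SetLike.mem_coe, LinearMap.mem_ker, e, hψg, hσmk]
    have hel : (Submodule.Quotient.mk ((d * (r : D)) ⊗ₜ[ℤ] m2 - d ⊗ₜ[ℤ] (r • m2)) :
        NCTensor D R M2) = 0 :=
      (Submodule.Quotient.mk_eq_zero _).mpr (Submodule.subset_span ⟨d, r, m2, rfl⟩)
    rw [hel, map_zero]
  set s0 : NCTensor D R M3 →ₗ[ℤ] (NCTensor D R M2 ⧸ P) :=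
    Submodule.liftQ _ ψ hψrel with hs0
  have hs0mk : ∀ y, s0 (Submodule.Quotient.mk y) = ψ y := fun y => rfl
  have hsmul : ∀ (d : D) (x : NCTensor D R M3), s0 (d • x) = d • s0 x := by
    intro d x
    refine NCTensor.inductionOn D R M3 (P := fun z => s0 (d • z) = d • s0 z) x ?_ ?_ ?_
    · show s0 (d • (0 : NCTensor D R M3)) = d • s0 0
      rw [smul_zero, map_zero, smul_zero]
    · intro a m3
      show s0 (d • (Submodule.Quotient.mk (a ⊗ₜ[ℤ] m3) : NCTensor D R M3)) =
        d • s0 (Submodule.Quotient.mk (a ⊗ₜ[ℤ] m3))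
      obtain ⟨m2, rfl⟩ := hg m3
      have e1 : a ⊗ₜ[ℤ] (g m2) = LinearMap.lTensor D gZ (a ⊗ₜ[ℤ] m2) := rfl
      have e2 : (d * a) ⊗ₜ[ℤ] (g m2) = LinearMap.lTensor D gZ ((d * a) ⊗ₜ[ℤ] m2) := rfl
      rw [nct_smul_def, lmulQ_mk_tmul, hs0mk, hs0mk, e1, e2, hψg, hψg, hσmk, hσmk,
        ← map_smul (Submodule.mkQ P), nct_smul_def, lmulQ_mk_tmul]
    · intro x y hx hy
      show s0 (d • (x + y)) = d • s0 (x + y)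
      rw [smul_add, map_add, map_add, smul_add, hx, hy]
  have hsurj : Function.Surjective s0 := by
    intro q
    obtain ⟨t, rfl⟩ := Submodule.mkQ_surjective P q
    obtain ⟨x, rfl⟩ := Submodule.Quotient.mk_surjective (tensorRel D R M2) t
    exact ⟨Submodule.Quotient.mk (LinearMap.lTensor D gZ x), by rw [hs0mk, hψg, hσmk]⟩
  let s : NCTensor D R M3 →ₗ[D] (NCTensor D R M2 ⧸ P) :=
    { toFun := s0, map_add' := map_add s0, map_smul' := hsmul }
  exact LinearMap.rank_le_of_surjective s hsurj

end SES

/-- **Lemma (extensions of `D`-torsion-free modules).** Let `R` be a subring of a division ring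
`D` and let `0 → M1 → M2 → M3 → 0` be a short exact sequence of left `R`-modules.  If `M1` and
`M3` are `D`-torsion-free, of finite `D`-dimension, and
`dim_D M1 + dim_D M3 = dim_D M2`, then `M2` is `D`-torsion-free. -/
theorem isDTorsionFree_of_ses (D : Type u) [DivisionRing D] (R : Subring D)
    (M1 M2 M3 : Type u) [AddCommGroup M1] [Module R M1] [AddCommGroup M2] [Module R M2]
    [AddCommGroup M3] [Module R M3]
    (f : M1 →ₗ[R] M2) (g : M2 →ₗ[R] M3)
    (hf : Function.Injective f) (hg : Function.Surjective g)
    (hfg : Function.Exact f g)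
    (h1 : IsDTorsionFree D R M1) (h3 : IsDTorsionFree D R M3)
    (d1 : Module.rank D (NCTensor D R M1) < Cardinal.aleph0)
    (d3 : Module.rank D (NCTensor D R M3) < Cardinal.aleph0)
    (hsum : Module.rank D (NCTensor D R M1) + Module.rank D (NCTensor D R M3) =
      Module.rank D (NCTensor D R M2)) :
    IsDTorsionFree D R M2 := by
  classical
  set F : NCTensor D R M1 →ₗ[D] NCTensor D R M2 := ncMap D R f with hFdef
  set P : Submodule D (NCTensor D R M2) := LinearMap.range F with hPdef
  have hq : Module.rank D (NCTensor D R M2 ⧸ P) + Module.rank D P =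
      Module.rank D (NCTensor D R M2) := Submodule.rank_quotient_add_rank P
  have hqle : Module.rank D (NCTensor D R M2 ⧸ P) ≤ Module.rank D (NCTensor D R M3) :=
    rank_quot_range_ncMap_le D R f g hg hfg
  have hrn : Module.rank D P + Module.rank D (LinearMap.ker F) =
      Module.rank D (NCTensor D R M1) := LinearMap.rank_range_add_rank_ker F
  -- finiteness
  have d2 : Module.rank D (NCTensor D R M2) < Cardinal.aleph0 := by
    rw [← hsum]; exact Cardinal.add_lt_aleph0 d1 d3
  have dP : Module.rank D P < Cardinal.aleph0 :=
    lt_of_le_of_lt (Submodule.rank_le P) d2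
  have dq : Module.rank D (NCTensor D R M2 ⧸ P) < Cardinal.aleph0 :=
    lt_of_le_of_lt hqle d3
  have dk : Module.rank D (LinearMap.ker F) < Cardinal.aleph0 :=
    lt_of_le_of_lt (le_trans le_add_self (le_of_eq hrn)) d1
  -- pass to natural numbers
  have hker0 : Module.rank D (LinearMap.ker F) = 0 := by
    have t1 := congrArg Cardinal.toNat hq
    have t2 := congrArg Cardinal.toNat hrn
    have t3 := congrArg Cardinal.toNat hsum
    rw [Cardinal.toNat_add dq dP] at t1
    rw [Cardinal.toNat_add dP dk] at t2
    rw [Cardinal.toNat_add d1 d3] at t3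
    have t4 := Cardinal.toNat_le_toNat hqle d3
    have t5 : Cardinal.toNat (Module.rank D (LinearMap.ker F)) = 0 := by omega
    rcases Cardinal.toNat_eq_zero.mp t5 with h | h
    · exact h
    · exact absurd dk (not_lt.mpr h)
  have hFinj : Function.Injective F := by
    rw [← LinearMap.ker_eq_bot]
    exact Submodule.rank_eq_zero.mp hker0
  -- the diagram chase
  have key : ∀ x : M2, toNCTensor D R M2 x = 0 → x = 0 := by
    intro x hx
    have hg0 : toNCTensor D R M3 (g x) = 0 := by
      rw [← ncMap_toNCTensor D R g x, hx, map_zero]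
    have hgx : g x = 0 := h3 (by rw [hg0, toNCTensor_zero D R (M := M3)])
    obtain ⟨m1, rfl⟩ := (hfg x).mp hgx
    have hF0 : F (toNCTensor D R M1 m1) = 0 := by
      rw [hFdef, ncMap_toNCTensor D R f m1, hx]
    have h10 : toNCTensor D R M1 m1 = 0 := hFinj (by rw [hF0, map_zero])
    have : m1 = 0 := h1 (by rw [h10, toNCTensor_zero D R (M := M1)])
    rw [this, map_zero]
  intro m m' hmm'
  have h0 : toNCTensor D R M2 (m - m') = 0 := by
    rw [toNCTensor_sub, hmm', sub_self]
  exact sub_eq_zero.mp (key (m - m') h0)
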